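/- The implication relation Γ on ordered pairs of distinct vertices lying in the same side of the bipartition, defined by (a,b) Γ (f,g) iff there exist congruent walks from a to f and from b to g, is an equivalence relation. -/

import Mathlib

namespace CocompBigraph

variable {V : Type*}

/-- `side` is a bipartition of the simple graph `G`: edges only join the two sides. -/
def IsBipartition (G : SimpleGraph V) (side : V → Bool) : Prop :=
  ∀ u v, G.Adj u v → side u ≠ side v

/-- Two edges `xy`, `x'y'` (with `x, x'` on one side and `y, y'` on the other) are
independent: they are disjoint and neither `xy'` nor `x'y` is an edge. -/
def Indep (G : SimpleGraph V) (x y x' y' : V) : Prop :=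
  G.Adj x y ∧ G.Adj x' y' ∧ x ≠ x' ∧ y ≠ y' ∧ ¬ G.Adj x y' ∧ ¬ G.Adj x' y

/-- `w` is a walk of length `n` in `G` (vertices `w 0, …, w n`). -/
def IsWalk (G : SimpleGraph V) (n : ℕ) (w : ℕ → V) : Prop :=
  ∀ i < n, G.Adj (w i) (w (i+1))

/-- Two walks of the same length `n`, beginning on the same side, are congruent if
for each `i` their `i`-th edges are independent. -/
def CongWalks (G : SimpleGraph V) (side : V → Bool) (n : ℕ) (w w' : ℕ → V) : Prop :=
  side (w 0) = side (w' 0) ∧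
  IsWalk G n w ∧ IsWalk G n w' ∧
  ∀ i < n, Indep G (w i) (w (i+1)) (w' i) (w' (i+1))

/-- `(a,b) Γ (f,g)`: there are congruent walks from `a` to `f` and from `b` to `g`. -/
def Gamma (G : SimpleGraph V) (side : V → Bool) (a b f g : V) : Prop :=
  ∃ n, ∃ w w' : ℕ → V, CongWalks G side n w w' ∧
    w 0 = a ∧ w' 0 = b ∧ w n = f ∧ w' n = g

/-- A pair of distinct vertices `u, v` is invertible if there are congruent walks
from `u` to `v` and from `v` to `u`. -/
def InvertiblePair (G : SimpleGraph V) (side : V → Bool) (u v : V) : Prop :=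
  u ≠ v ∧ Gamma G side u v v u

/-- A pair `(a,b)` is relevant if its implication class contains at least two pairs. -/
def Relevant (G : SimpleGraph V) (side : V → Bool) (a b : V) : Prop :=
  ∃ f g, Gamma G side a b f g ∧ (f, g) ≠ (a, b)

/-- An orientation of the complement of `G`: every pair of distinct vertices on the
same side gets exactly one direction (cross pairs stay undirected). -/
def IsOrientation (side : V → Bool) (O : V → V → Prop) : Prop :=
  (∀ u v, O u v → side u = side v ∧ u ≠ v) ∧
  (∀ u v, u ≠ v → side u = side v → (O u v ↔ ¬ O v u))

/-- The orientation `O` is `T`-free: no two independent edges of the bipartite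
complement agree in `O`. -/
def TFree (G : SimpleGraph V) (side : V → Bool) (O : V → V → Prop) : Prop :=
  ∀ x y x' y', side x = side x' → side y = side y' → side x ≠ side y →
    x ≠ x' → y ≠ y' → ¬ G.Adj x y → ¬ G.Adj x' y' →
    G.Adj x y' → G.Adj x' y → ¬ (O x x' ∧ O y y')

/-- The relation `O` has no directed cycle. -/
def OAcyclic (O : V → V → Prop) : Prop :=
  ∀ (n : ℕ) (w : ℕ → V), 0 < n → (∀ i < n, O (w i) (w (i+1))) → w 0 ≠ w n

/-- `G` has an `S`-free pair of orderings: linear orders of the two sides such that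
no two independent edges cross. -/
def SFreePair (G : SimpleGraph V) (side : V → Bool) : Prop :=
  ∃ lt : V → V → Prop,
    (∀ u v, lt u v → side u = side v ∧ u ≠ v) ∧
    (∀ u v, u ≠ v → side u = side v → (lt u v ↔ ¬ lt v u)) ∧
    (∀ u v w, lt u v → lt v w → lt u w) ∧
    (∀ u v w z, side u ≠ side w → lt u v → lt w z →
      G.Adj u z → G.Adj v w → (G.Adj u w ∨ G.Adj v z))

/-- An edge-asteroid: `2k+1` distinct edges `x i — y i` such that for each `i` there
is a walk joining the edges `e (i+k)` and `e (i+k+1)` (including both endpoints of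
each) containing no vertex adjacent to either end of `e i`. -/
def EdgeAsteroid (G : SimpleGraph V) (k : ℕ) (x y : ZMod (2*k+1) → V) : Prop :=
  1 ≤ k ∧
  (∀ i, G.Adj (x i) (y i)) ∧
  (∀ i j : ZMod (2*k+1), i ≠ j → (x i, y i) ≠ (x j, y j)) ∧
  ∀ i : ZMod (2*k+1), ∃ n, ∃ w : ℕ → V, IsWalk G n w ∧ 1 ≤ n ∧
    ((w 0 = x (i+k) ∧ w 1 = y (i+k)) ∨ (w 0 = y (i+k) ∧ w 1 = x (i+k))) ∧
    ((w (n-1) = y (i+k+1) ∧ w n = x (i+k+1)) ∨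
      (w (n-1) = x (i+k+1) ∧ w n = y (i+k+1))) ∧
    ∀ j ≤ n, ¬ G.Adj (w j) (x i) ∧ ¬ G.Adj (w j) (y i)

/-- An asteroid in a graph `H`: `2k+1` distinct vertices such that for each `i` there
is a path joining `v (i+k)` and `v (i+k+1)` none of whose vertices is a neighbour
of `v i`. -/
def Asteroid {W : Type*} (H : SimpleGraph W) (k : ℕ) (v : ZMod (2*k+1) → W) : Prop :=
  1 ≤ k ∧ Function.Injective v ∧
  ∀ i : ZMod (2*k+1), ∃ n, ∃ w : ℕ → W, IsWalk H n w ∧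
    w 0 = v (i+k) ∧ w n = v (i+(k+1)) ∧
    (∀ a ≤ n, ∀ b ≤ n, w a = w b → a = b) ∧
    ∀ j ≤ n, ¬ H.Adj (w j) (v i)

/-- The independence graph `I(G)`: vertices are the edges of `G` (oriented from side
`true` to side `false`), adjacent iff independent. -/
def IndepGraph (G : SimpleGraph V) (side : V → Bool) :
    SimpleGraph {p : V × V // G.Adj p.1 p.2 ∧ side p.1 = true} where
  Adj e f := Indep G e.1.1 e.1.2 f.1.1 f.1.2
  symm := ⟨by
    rintro e f ⟨h1, h2, h3, h4, h5, h6⟩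
    exact ⟨h2, h1, h3.symm, h4.symm, h6, h5⟩⟩
  loopless := ⟨by
    rintro e ⟨_, _, h3, _⟩
    exact h3 rfl⟩

/-- A graph is a comparability graph iff it has a transitive orientation. -/
def HasTransitiveOrientation {W : Type*} (H : SimpleGraph W) : Prop :=
  ∃ r : W → W → Prop,
    (∀ u v, r u v → H.Adj u v) ∧
    (∀ u v, H.Adj u v → (r u v ↔ ¬ r v u)) ∧
    (∀ u v w, r u v → r v w → r u w)

/-- The cycle `C_n` on vertex set `ZMod n`. -/
def cycleGraph (n : ℕ) : SimpleGraph (ZMod n) where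
  Adj i j := i ≠ j ∧ (j = i + 1 ∨ i = j + 1)
  symm := ⟨by rintro i j ⟨h, h'⟩; exact ⟨h.symm, h'.symm⟩⟩
  loopless := ⟨by rintro i ⟨h, _⟩; exact h rfl⟩

/-- `G` contains an induced cycle of length `n`. -/
def HasInducedCycle (G : SimpleGraph V) (n : ℕ) : Prop :=
  ∃ f : ZMod n → V, Function.Injective f ∧
    ∀ i j, G.Adj (f i) (f j) ↔ (cycleGraph n).Adj i j

/-- Adjacency of the auxiliary graph `G⁺` on ordered pairs:
`(u,v)` is adjacent to `(v,u)` and to every `(z,w)` such that `uw` and `vz` are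
independent edges of `G`. -/
def AuxAdj (G : SimpleGraph V) (p q : V × V) : Prop :=
  (q.1 = p.2 ∧ q.2 = p.1) ∨
  (G.Adj p.1 q.2 ∧ G.Adj p.2 q.1 ∧ p.1 ≠ p.2 ∧ q.1 ≠ q.2 ∧
    ¬ G.Adj p.1 q.1 ∧ ¬ G.Adj p.2 q.2)

/-- The auxiliary graph `G⁺`, on the set `F` of ordered pairs of distinct same-side
vertices, is bipartite (i.e. properly 2-colourable). -/
def AuxBipartite (G : SimpleGraph V) (side : V → Bool) : Prop :=
  ∃ c : {p : V × V // p.1 ≠ p.2 ∧ side p.1 = side p.2} → Bool,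
    ∀ p q, AuxAdj G p.1 q.1 → c p ≠ c q

/-- `G` is an interval containment bigraph. -/
def IntervalContainment (G : SimpleGraph V) (side : V → Bool) : Prop :=
  ∃ l r : V → ℝ, (∀ v, l v ≤ r v) ∧
    ∀ x y, side x = true → side y = false →
      (G.Adj x y ↔ (l x ≤ l y ∧ r y ≤ r x))

lemma indep_flip {G : SimpleGraph V} {x y x' y' : V} (h : Indep G x y x' y') :
    Indep G y x y' x' := by
  obtain ⟨h1, h2, h3, h4, h5, h6⟩ := h
  exact ⟨h1.symm, h2.symm, h4, h3, fun h => h6 h.symm, fun h => h5 h.symm⟩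

lemma cong_side {G : SimpleGraph V} {side : V → Bool} (hbip : IsBipartition G side)
    {n : ℕ} {w w' : ℕ → V} (h : CongWalks G side n w w') :
    ∀ i ≤ n, side (w i) = side (w' i) := by
  intro i hi
  induction i with
  | zero => exact h.1
  | succ k ih =>
    have hk : k < n := hi
    have e1 := hbip _ _ (h.2.1 k hk)
    have e2 := hbip _ _ (h.2.2.1 k hk)
    have e3 := ih (le_of_lt hk)
    revert e1 e2 e3
    cases side (w k) <;> cases side (w' k) <;>
      cases side (w (k+1)) <;> cases side (w' (k+1)) <;> simp_all

/-- the implication relation `Γ` is an equivalence relation on the set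
of ordered pairs of distinct same-side vertices. -/
theorem stmt_6 (G : SimpleGraph V) (side : V → Bool) (hbip : IsBipartition G side) :
    Equivalence (fun p q : {p : V × V // p.1 ≠ p.2 ∧ side p.1 = side p.2} =>
      Gamma G side p.1.1 p.1.2 q.1.1 q.1.2) := by
  constructor
  · rintro ⟨⟨a, b⟩, hab, hside⟩
    exact ⟨0, (fun _ => a), (fun _ => b),
      ⟨hside, fun i h => absurd h (Nat.not_lt_zero i),
        fun i h => absurd h (Nat.not_lt_zero i),
        fun i h => absurd h (Nat.not_lt_zero i)⟩, rfl, rfl, rfl, rfl⟩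
  · rintro ⟨⟨a, b⟩, hab, hs⟩ ⟨⟨f, g⟩, hfg, hs'⟩ ⟨n, w, w', hc, h0, h0', hn, hn'⟩
    refine ⟨n, fun i => w (n - i), fun i => w' (n - i), ⟨?_, ?_, ?_, ?_⟩,
      by simpa using hn, by simpa using hn', by simpa using h0, by simpa using h0'⟩
    · simpa using cong_side hbip hc n le_rfl
    · intro i hi
      have e : n - (i+1) + 1 = n - i := by omega
      have := hc.2.1 (n - (i+1)) (by omega)
      rw [e] at this
      exact this.symm
    · intro i hi
      have e : n - (i+1) + 1 = n - i := by omega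
      have := hc.2.2.1 (n - (i+1)) (by omega)
      rw [e] at this
      exact this.symm
    · intro i hi
      have e : n - (i+1) + 1 = n - i := by omega
      have := hc.2.2.2 (n - (i+1)) (by omega)
      rw [e] at this
      exact indep_flip this
  · rintro ⟨⟨a, b⟩, hab, hs⟩ ⟨⟨f, g⟩, hfg, hs'⟩ ⟨⟨h, k⟩, hhk, hs''⟩
      ⟨n, w1, w1', hc1, ha, hb, hf, hg⟩ ⟨m, w2, w2', hc2, hf2, hg2, hh, hk'⟩
    refine ⟨n + m, fun i => if i < n then w1 i else w2 (i - n),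
      fun i => if i < n then w1' i else w2' (i - n), ⟨?_, ?_, ?_, ?_⟩, ?_, ?_, ?_, ?_⟩
    · by_cases h0 : 0 < n
      · simp only [if_pos h0]; exact hc1.1
      · have hn0 : n = 0 := by omega
        subst hn0; simpa using hc2.1
    · intro i hi
      by_cases hin : i < n
      · by_cases hin1 : i + 1 < n
        · simpa [hin, hin1] using hc1.2.1 i hin
        · have : i + 1 = n := by omega
          have e : w2 (i + 1 - n) = w1 (i+1) := by
            rw [this, Nat.sub_self, hf2, hf]
          simp only [if_pos hin, if_neg hin1, e]
          exact hc1.2.1 i hin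
      · have e : i + 1 - n = (i - n) + 1 := by omega
        simp only [if_neg hin, if_neg (by omega : ¬ i + 1 < n), e]
        exact hc2.2.1 (i - n) (by omega)
    · intro i hi
      by_cases hin : i < n
      · by_cases hin1 : i + 1 < n
        · simpa [hin, hin1] using hc1.2.2.1 i hin
        · have : i + 1 = n := by omega
          have e : w2' (i + 1 - n) = w1' (i+1) := by
            rw [this, Nat.sub_self, hg2, hg]
          simp only [if_pos hin, if_neg hin1, e]
          exact hc1.2.2.1 i hin
      · have e : i + 1 - n = (i - n) + 1 := by omega
        simp only [if_neg hin, if_neg (by omega : ¬ i + 1 < n), e]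
        exact hc2.2.2.1 (i - n) (by omega)
    · intro i hi
      by_cases hin : i < n
      · by_cases hin1 : i + 1 < n
        · simpa [hin, hin1] using hc1.2.2.2 i hin
        · have : i + 1 = n := by omega
          have e : w2 (i + 1 - n) = w1 (i+1) := by
            rw [this, Nat.sub_self, hf2, hf]
          have e' : w2' (i + 1 - n) = w1' (i+1) := by
            rw [this, Nat.sub_self, hg2, hg]
          simp only [if_pos hin, if_neg hin1, e, e']
          exact hc1.2.2.2 i hin
      · have e : i + 1 - n = (i - n) + 1 := by omega
        simp only [if_neg hin, if_neg (by omega : ¬ i + 1 < n), e]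
        exact hc2.2.2.2 (i - n) (by omega)
    · by_cases h0 : 0 < n <;> simp_all
    · by_cases h0 : 0 < n <;> simp_all
    · simp [hh]
    · simp [hk']

end CocompBigraph
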